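/- The curves t ↦ (t, -t⁻¹, -t, t⁻¹) and t ↦ (t, t⁻¹, -t, -t⁻¹), for t ∈ ℂ*, are solutions of the cyclic 4-roots system: x₁+x₂+x₃+x₄ = 0, x₁x₂+x₂x₃+x₃x₄+x₄x₁ = 0, x₁x₂x₃+x₂x₃x₄+x₃x₄x₁+x₄x₁x₂ = 0, x₁x₂x₃x₄ - 1 = 0. -/

import Mathlib

/-- The curves `t ↦ (t, -t⁻¹, -t, t⁻¹)` and `t ↦ (t, t⁻¹, -t, -t⁻¹)`, for
`t ∈ ℂ*`, are solutions of the cyclic 4-roots system. -/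
theorem stmt7 (t : ℂ) (ht : t ≠ 0) :
    (∀ x₁ x₂ x₃ x₄ : ℂ,
      ((x₁, x₂, x₃, x₄) = (t, -t⁻¹, -t, t⁻¹) ∨
       (x₁, x₂, x₃, x₄) = (t, t⁻¹, -t, -t⁻¹)) →
      x₁ + x₂ + x₃ + x₄ = 0 ∧
      x₁ * x₂ + x₂ * x₃ + x₃ * x₄ + x₄ * x₁ = 0 ∧
      x₁ * x₂ * x₃ + x₂ * x₃ * x₄ + x₃ * x₄ * x₁ + x₄ * x₁ * x₂ = 0 ∧
      x₁ * x₂ * x₃ * x₄ - 1 = 0) := by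
  rintro x₁ x₂ x₃ x₄ (h | h) <;>
  · simp only [Prod.mk.injEq] at h
    obtain ⟨rfl, rfl, rfl, rfl⟩ := h
    refine ⟨by ring, by ring, by field_simp; ring, by field_simp; ring⟩
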